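/- Let z ∈ ℝ^D with D ≥ 2 and γ > 0. Then the average over the unit sphere S_D = {v ∈ ℝ^D : ‖v‖ = 1} (with respect to the normalized surface measure σ_D) of the one-dimensional Gaussian density N(vᵀz, γ) evaluated at 0 equals (2πγ)^{-1/2} · φ_D(‖z‖²/(2γ)), where φ_D(s) = ₁F₁(1/2; D/2; −s). -/

import Mathlib

open MeasureTheory Real Filter
open scoped RealInnerProductSpace BigOperators

/-- One-dimensional Gaussian density with mean `m` and variance `S`. -/
noncomputable def gaussDen (m S x : ℝ) : ℝ :=
  (Real.sqrt (2 * Real.pi * S))⁻¹ * Real.exp (-(x - m) ^ 2 / (2 * S))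

/-- Kummer's confluent hypergeometric function `₁F₁(a;b;z)`. -/
noncomputable def kummerM (a b z : ℝ) : ℝ :=
  ∑' k : ℕ, ((ascPochhammer ℝ k).eval a / (ascPochhammer ℝ k).eval b) * z ^ k / (Nat.factorial k : ℝ)

/-- `φ_D(s) = ₁F₁(1/2; D/2; −s)`. -/
noncomputable def phiD (D : ℕ) (s : ℝ) : ℝ := kummerM (1 / 2) ((D : ℝ) / 2) (-s)

/-- Normalized (probability) surface measure on the unit sphere in `ℝ^D`. -/
noncomputable def sphereUniform (D : ℕ) :
    Measure (Metric.sphere (0 : EuclideanSpace ℝ (Fin D)) 1) :=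
  (((volume : Measure (EuclideanSpace ℝ (Fin D))).toSphere Set.univ)⁻¹) •
    (volume : Measure (EuclideanSpace ℝ (Fin D))).toSphere

/-- Total surface volume of the unit sphere in `ℝ^K`. -/
noncomputable def sphereVol (K : ℕ) : ℝ :=
  ((volume : Measure (EuclideanSpace ℝ (Fin K))).toSphere Set.univ).toReal

section Aux
open Set Metric
open scoped ENNReal

lemma gamma_asc (x : ℝ) (hx : 0 < x) (k : ℕ) :
    Real.Gamma (x + k) = (ascPochhammer ℝ k).eval x * Real.Gamma x := by
  induction k with
  | zero => simp
  | succ n ih =>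
      have hxn : (x + n : ℝ) ≠ 0 := by positivity
      have h1 : (x + (n+1 : ℕ) : ℝ) = (x + n) + 1 := by push_cast; ring
      rw [h1, Real.Gamma_add_one hxn, ih, ascPochhammer_succ_eval]
      ring

lemma ascPochhammer_pos' (k : ℕ) {x : ℝ} (hx : 0 < x) :
    0 < (ascPochhammer ℝ k).eval x := ascPochhammer_pos k x hx

lemma integral_Ioi_rpow_exp {p : ℝ} (hp : -1 < p) :
    ∫ r in Ioi (0:ℝ), r ^ p * Real.exp (-r^2/2)
      = 2 ^ ((p+1)/2 - 1) * Real.Gamma ((p+1)/2) := by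
  have h := integral_rpow_mul_exp_neg_mul_rpow (p := 2) (q := p) (b := 1/2)
    two_pos hp (by norm_num)
  have heq : ∫ r in Ioi (0:ℝ), r ^ p * Real.exp (-r^2/2)
      = ∫ x in Ioi (0:ℝ), x ^ p * Real.exp (-(1/2) * x ^ (2:ℝ)) := by
    refine setIntegral_congr_fun measurableSet_Ioi (fun x hx => ?_)
    rw [show (2:ℝ) = ((2:ℕ):ℝ) by norm_num, Real.rpow_natCast]
    rw [neg_div, neg_mul]
    congr 2
    ring
  rw [heq, h]
  have h2 : ((1:ℝ)/2) ^ (-(p+1)/2 : ℝ) = 2 ^ ((p+1)/2 : ℝ) := by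
    rw [one_div, ← Real.rpow_neg_one (2:ℝ), ← Real.rpow_mul (by norm_num)]
    ring_nf
  rw [h2, Real.rpow_sub two_pos, Real.rpow_one]
  ring

lemma gauss_moment_1d (k : ℕ) :
    ∫ t : ℝ, t ^ (2*k) * Real.exp (-t^2/2)
      = 2 ^ ((k:ℝ) + 1/2) * Real.Gamma ((k:ℝ) + 1/2) := by
  have h1 : ∫ t : ℝ, t ^ (2*k) * Real.exp (-t^2/2)
      = 2 * ∫ t in Ioi (0:ℝ), t ^ (2*k) * Real.exp (-t^2/2) := by
    rw [← integral_comp_abs (f := fun t => t ^ (2*k) * Real.exp (-t^2/2))]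
    congr 1
    funext t
    rw [pow_mul, pow_mul, sq_abs]
  have h2 : ∫ t in Ioi (0:ℝ), t ^ (2*k) * Real.exp (-t^2/2)
      = ∫ t in Ioi (0:ℝ), t ^ ((2*k : ℕ):ℝ) * Real.exp (-t^2/2) := by
    refine setIntegral_congr_fun measurableSet_Ioi (fun x hx => ?_)
    rw [Real.rpow_natCast]
  have h3 : (-1:ℝ) < ((2*k : ℕ):ℝ) := by have : (0:ℝ) ≤ ((2*k : ℕ):ℝ) := Nat.cast_nonneg _; linarith
  rw [h1, h2, integral_Ioi_rpow_exp h3]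
  have h4 : (((2*k : ℕ):ℝ) + 1)/2 = (k:ℝ) + 1/2 := by push_cast; ring
  rw [h4, ← mul_assoc]
  congr 1
  rw [← Real.rpow_one_add' (by norm_num) (by
    have : (0:ℝ) < (k:ℝ) + 1/2 := by positivity
    intro h; rw [show (1:ℝ) + ((k:ℝ)+1/2-1) = (k:ℝ)+1/2 by ring] at h; linarith)]
  congr 1; ring

lemma gaussE_unit (D : ℕ) (hD : 1 ≤ D) (e : EuclideanSpace ℝ (Fin D)) (he : ‖e‖ = 1) (k : ℕ) :
    ∫ x : EuclideanSpace ℝ (Fin D), ⟪x, e⟫ ^ (2*k) * Real.exp (-‖x‖^2/2)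
      = (∫ t : ℝ, t ^ (2*k) * Real.exp (-t^2/2))
        * (∫ t : ℝ, Real.exp (-t^2/2)) ^ (D-1) := by
  haveI : NeZero D := ⟨by omega⟩
  have hE : True := trivial
  set v : EuclideanSpace ℝ (Fin D) := EuclideanSpace.single (0 : Fin D) (1:ℝ) with hv_def
  have hv : ‖v‖ = 1 := by simp [hv_def]
  set f : EuclideanSpace ℝ (Fin D) ≃ₗᵢ[ℝ] EuclideanSpace ℝ (Fin D) := Submodule.reflection (ℝ ∙ (v - e))ᗮ with hf_def
  have hfv : f v = e := Submodule.reflection_sub (by rw [hv, he])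
  have hmp : MeasurePreserving f volume volume := f.measurePreserving
  -- step 1: replace e by v
  have step1 : ∫ x : EuclideanSpace ℝ (Fin D), ⟪x, e⟫ ^ (2*k) * Real.exp (-‖x‖^2/2)
      = ∫ x : EuclideanSpace ℝ (Fin D), ⟪x, v⟫ ^ (2*k) * Real.exp (-‖x‖^2/2) := by
    rw [← hmp.integral_comp f.toHomeomorph.measurableEmbedding
      (fun x => ⟪x, e⟫ ^ (2*k) * Real.exp (-‖x‖^2/2))]
    congr 1
    funext x
    rw [← hfv, f.inner_map_map, f.norm_map]
  -- step 2: to Pi type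
  have hmp2 : MeasurePreserving (MeasurableEquiv.toLp 2 (Fin D → ℝ)) volume volume :=
    (EuclideanSpace.volume_preserving_symm_measurableEquiv_toLp (Fin D)).symm
  have step2 : ∫ x : EuclideanSpace ℝ (Fin D), ⟪x, v⟫ ^ (2*k) * Real.exp (-‖x‖^2/2)
      = ∫ y : Fin D → ℝ, (y 0) ^ (2*k) * Real.exp (-(∑ i, (y i)^2)/2) := by
    rw [← hmp2.integral_comp (MeasurableEquiv.toLp 2 (Fin D → ℝ)).measurableEmbedding
      (fun x => ⟪x, v⟫ ^ (2*k) * Real.exp (-‖x‖^2/2))]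
    congr 1
    funext y
    have h1 : ⟪(MeasurableEquiv.toLp 2 (Fin D → ℝ)) y, v⟫ = y 0 := by
      rw [hv_def, EuclideanSpace.inner_single_right]
      simp [MeasurableEquiv.coe_toLp]
    have h2 : ‖(MeasurableEquiv.toLp 2 (Fin D → ℝ)) y‖^2 = ∑ i, (y i)^2 := by
      rw [EuclideanSpace.norm_eq, Real.sq_sqrt (by positivity)]
      simp [MeasurableEquiv.coe_toLp, sq_abs]
    rw [h1, h2]
  -- step 3: factor as product
  have step3 : ∫ y : Fin D → ℝ, (y 0) ^ (2*k) * Real.exp (-(∑ i, (y i)^2)/2)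
      = ∏ i : Fin D, ∫ t : ℝ, (if i = 0 then t ^ (2*k) else 1) * Real.exp (-t^2/2) := by
    rw [← MeasureTheory.integral_fintype_prod_eq_prod (ι := Fin D)
      (f := fun i t => (if i = 0 then t ^ (2*k) else 1) * Real.exp (-t^2/2))]
    congr 1
    funext y
    rw [Finset.prod_mul_distrib, ← Real.exp_sum]
    congr 1
    · rw [Finset.prod_ite_eq' Finset.univ (0 : Fin D) (fun i => (y i) ^ (2*k))]
      simp
    · congr 1
      rw [← Finset.sum_div, ← Finset.sum_neg_distrib]
  have hsplit : (∏ i : Fin D, ∫ t : ℝ, (if i = 0 then t ^ (2*k) else 1) * Real.exp (-t^2/2))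
      = (∫ t : ℝ, t ^ (2*k) * Real.exp (-t^2/2)) * (∫ t : ℝ, Real.exp (-t^2/2)) ^ (D-1) := by
    rw [← Finset.mul_prod_erase Finset.univ
      (fun i => ∫ t : ℝ, (if i = 0 then t ^ (2*k) else 1) * Real.exp (-t^2/2))
      (Finset.mem_univ (0 : Fin D))]
    have hcong : ∀ i ∈ Finset.univ.erase (0 : Fin D),
        (∫ t : ℝ, (if i = 0 then t ^ (2*k) else 1) * Real.exp (-t^2/2))
          = ∫ t : ℝ, Real.exp (-t^2/2) := by
      intro i hi
      have hne : i ≠ 0 := Finset.ne_of_mem_erase hi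
      simp [hne]
    rw [Finset.prod_congr rfl hcong, Finset.prod_const,
      Finset.card_erase_of_mem (Finset.mem_univ _), Finset.card_univ, Fintype.card_fin]
    norm_num
  rw [step1, step2, step3, hsplit]

lemma gaussE (D : ℕ) (hD : 1 ≤ D) (z : EuclideanSpace ℝ (Fin D)) (k : ℕ) :
    ∫ x : EuclideanSpace ℝ (Fin D), ⟪x, z⟫ ^ (2*k) * Real.exp (-‖x‖^2/2)
      = ‖z‖ ^ (2*k) * ((∫ t : ℝ, t ^ (2*k) * Real.exp (-t^2/2))
        * (∫ t : ℝ, Real.exp (-t^2/2)) ^ (D-1)) := by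
  rcases eq_or_ne z 0 with rfl | hz
  · rcases Nat.eq_zero_or_pos k with rfl | hk
    · haveI : NeZero D := ⟨by omega⟩
      have h := gaussE_unit D hD (EuclideanSpace.single (0 : Fin D) (1:ℝ)) (by simp) 0
      simpa using h
    · have hk' : 2*k ≠ 0 := by omega
      simp [zero_pow hk']
  · set e : EuclideanSpace ℝ (Fin D) := (‖z‖⁻¹ : ℝ) • z with he_def
    have he : ‖e‖ = 1 := norm_smul_inv_norm hz
    have hinner : ∀ x : EuclideanSpace ℝ (Fin D), ⟪x, z⟫ = ‖z‖ * ⟪x, e⟫ := by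
      intro x
      rw [he_def, real_inner_smul_right, ← mul_assoc,
        mul_inv_cancel₀ (norm_ne_zero_iff.mpr hz), one_mul]
    have : ∫ x : EuclideanSpace ℝ (Fin D), ⟪x, z⟫ ^ (2*k) * Real.exp (-‖x‖^2/2)
        = ∫ x : EuclideanSpace ℝ (Fin D),
            ‖z‖ ^ (2*k) * (⟪x, e⟫ ^ (2*k) * Real.exp (-‖x‖^2/2)) := by
      congr 1; funext x; rw [hinner x, mul_pow]; ring
    rw [this, integral_const_mul, gaussE_unit D hD e he k]

lemma polar_decomp (D : ℕ) (hD : 2 ≤ D) (z : EuclideanSpace ℝ (Fin D)) (k : ℕ) :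
    ∫ x : EuclideanSpace ℝ (Fin D), ⟪x, z⟫ ^ (2*k) * Real.exp (-‖x‖^2/2)
      = (∫ v : Metric.sphere (0 : EuclideanSpace ℝ (Fin D)) 1,
          ⟪(v : EuclideanSpace ℝ (Fin D)), z⟫ ^ (2*k)
            ∂((volume : Measure (EuclideanSpace ℝ (Fin D))).toSphere))
        * ∫ r in Ioi (0:ℝ), (r ^ (D-1) * r ^ (2*k)) * Real.exp (-r^2/2) := by
  haveI : Nontrivial (EuclideanSpace ℝ (Fin D)) := by
    apply Module.nontrivial_of_finrank_pos (R := ℝ) (M := EuclideanSpace ℝ (Fin D))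
    rw [finrank_euclideanSpace_fin]; omega
  have hdim : Module.finrank ℝ (EuclideanSpace ℝ (Fin D)) = D := finrank_euclideanSpace_fin
  set μ : Measure (EuclideanSpace ℝ (Fin D)) := volume with hμ
  set g : EuclideanSpace ℝ (Fin D) → ℝ :=
    fun x => ⟪x, z⟫ ^ (2*k) * Real.exp (-‖x‖^2/2) with hg
  set F1 : Metric.sphere (0 : EuclideanSpace ℝ (Fin D)) 1 → ℝ :=
    fun v => ⟪(v : EuclideanSpace ℝ (Fin D)), z⟫ ^ (2*k) with hF1
  set F2 : Ioi (0:ℝ) → ℝ := fun r => (r : ℝ) ^ (2*k) * Real.exp (-(r:ℝ)^2/2) with hF2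
  set F : Metric.sphere (0 : EuclideanSpace ℝ (Fin D)) 1 × Ioi (0:ℝ) → ℝ :=
    fun p => F1 p.1 * F2 p.2 with hF
  have step1 : ∫ x, g x ∂μ = ∫ x : ({0}ᶜ : Set (EuclideanSpace ℝ (Fin D))), g x.1
      ∂(μ.comap Subtype.val) := by
    rw [integral_subtype_comap (measurableSet_singleton _).compl g,
      MeasureTheory.restrict_compl_singleton]
  have step2 : ∫ x : ({0}ᶜ : Set (EuclideanSpace ℝ (Fin D))), g x.1 ∂(μ.comap Subtype.val)
      = ∫ p, F p ∂(μ.toSphere.prod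
          (Measure.volumeIoiPow (Module.finrank ℝ (EuclideanSpace ℝ (Fin D)) - 1))) := by
    rw [← (μ.measurePreserving_homeomorphUnitSphereProd).integral_comp
      (Homeomorph.measurableEmbedding _) F]
    congr 1
    funext x
    have hx0 : (x : EuclideanSpace ℝ (Fin D)) ≠ 0 := x.2
    have hnx : ‖(x : EuclideanSpace ℝ (Fin D))‖ ≠ 0 := norm_ne_zero_iff.mpr hx0
    simp only [hF, hF1, hF2, hg, homeomorphUnitSphereProd_apply_fst_coe,
      homeomorphUnitSphereProd_apply_snd_coe]
    rw [real_inner_smul_left, mul_pow, ← mul_assoc,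
      mul_right_comm (‖(x : EuclideanSpace ℝ (Fin D))‖⁻¹ ^ (2*k))
        (⟪(x : EuclideanSpace ℝ (Fin D)), z⟫ ^ (2*k))
        (‖(x : EuclideanSpace ℝ (Fin D))‖ ^ (2*k)),
      ← mul_pow, inv_mul_cancel₀ hnx, one_pow, one_mul]
  have step3 : ∫ p, F p ∂(μ.toSphere.prod
        (Measure.volumeIoiPow (Module.finrank ℝ (EuclideanSpace ℝ (Fin D)) - 1)))
      = (∫ v : Metric.sphere (0 : EuclideanSpace ℝ (Fin D)) 1, F1 v ∂μ.toSphere)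
        * ∫ r : Ioi (0:ℝ), F2 r
            ∂(Measure.volumeIoiPow (Module.finrank ℝ (EuclideanSpace ℝ (Fin D)) - 1)) :=
    integral_prod_mul (L := ℝ) F1 F2
  have step4 : ∫ r : Ioi (0:ℝ), F2 r
        ∂(Measure.volumeIoiPow (Module.finrank ℝ (EuclideanSpace ℝ (Fin D)) - 1))
      = ∫ r in Ioi (0:ℝ), (r ^ (D-1) * r ^ (2*k)) * Real.exp (-r^2/2) := by
    rw [hdim]
    simp only [Measure.volumeIoiPow, ENNReal.ofReal]
    rw [integral_withDensity_eq_integral_smul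
      ((measurable_subtype_coe.pow_const _).real_toNNReal) F2]
    simp only [hF2]
    rw [integral_subtype_comap measurableSet_Ioi
      (fun a : ℝ => (a ^ (D-1)).toNNReal • (a ^ (2*k) * Real.exp (-a^2/2)))]
    refine setIntegral_congr_fun measurableSet_Ioi (fun x hx => ?_)
    rw [NNReal.smul_def, Real.coe_toNNReal _ (pow_nonneg (le_of_lt hx) _), smul_eq_mul]
    ring
  rw [step1, step2, step3, step4]

lemma radial_int (D : ℕ) (hD : 2 ≤ D) (k : ℕ) :
    ∫ r in Ioi (0:ℝ), (r ^ (D-1) * r ^ (2*k)) * Real.exp (-r^2/2)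
      = 2 ^ ((D:ℝ)/2 + k - 1) * Real.Gamma ((D:ℝ)/2 + k) := by
  have h1 : ∫ r in Ioi (0:ℝ), (r ^ (D-1) * r ^ (2*k)) * Real.exp (-r^2/2)
      = ∫ r in Ioi (0:ℝ), r ^ (((D-1+2*k : ℕ)):ℝ) * Real.exp (-r^2/2) := by
    refine setIntegral_congr_fun measurableSet_Ioi (fun x hx => ?_)
    rw [Real.rpow_natCast, pow_add]
  have h2 : (-1:ℝ) < ((D-1+2*k : ℕ):ℝ) := by
    have : (0:ℝ) ≤ ((D-1+2*k : ℕ):ℝ) := Nat.cast_nonneg _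
    linarith
  rw [h1, integral_Ioi_rpow_exp h2]
  have h3 : (((D-1+2*k : ℕ):ℝ) + 1)/2 = (D:ℝ)/2 + k := by
    have h4 : ((D-1+2*k : ℕ):ℝ) = (D:ℝ) - 1 + 2*k := by
      push_cast [Nat.cast_sub (by omega : 1 ≤ D)]; ring
    rw [h4]; ring
  rw [h3]

theorem sphere_moment (D : ℕ) (hD : 2 ≤ D) (z : EuclideanSpace ℝ (Fin D)) (k : ℕ) :
    ∫ v : Metric.sphere (0 : EuclideanSpace ℝ (Fin D)) 1,
        ⟪(v : EuclideanSpace ℝ (Fin D)), z⟫ ^ (2*k) ∂(sphereUniform D)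
      = ‖z‖ ^ (2*k)
        * ((ascPochhammer ℝ k).eval (1/2 : ℝ) / (ascPochhammer ℝ k).eval ((D:ℝ)/2)) := by
  set c1 : ℝ := ∫ t : ℝ, Real.exp (-t^2/2) with hc1def
  have hc1 : c1 = 2 ^ ((1:ℝ)/2) * Real.Gamma (1/2) := by
    have h := gauss_moment_1d 0
    simp only [Nat.mul_zero, pow_zero, one_mul, Nat.cast_zero, zero_add] at h
    rw [hc1def, h]
  have hc1pos : 0 < c1 := by
    rw [hc1]
    exact mul_pos (Real.rpow_pos_of_pos two_pos _) (Real.Gamma_pos_of_pos (by norm_num))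
  set A : ℕ → ℝ := fun k => ∫ v : Metric.sphere (0 : EuclideanSpace ℝ (Fin D)) 1,
      ⟪(v : EuclideanSpace ℝ (Fin D)), z⟫ ^ (2*k)
        ∂((volume : Measure (EuclideanSpace ℝ (Fin D))).toSphere) with hA
  have hDhalf : (0:ℝ) < (D:ℝ)/2 := by positivity
  have hGpos : ∀ m : ℕ, (0:ℝ) < 2 ^ ((D:ℝ)/2 + m - 1) * Real.Gamma ((D:ℝ)/2 + m) :=
    fun m => mul_pos (Real.rpow_pos_of_pos two_pos _)
      (Real.Gamma_pos_of_pos (by positivity))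
  have hAval : ∀ m : ℕ, A m = ‖z‖ ^ (2*m)
      * ((2 ^ ((m:ℝ) + 1/2) * Real.Gamma ((m:ℝ) + 1/2)) * c1 ^ (D-1))
      / (2 ^ ((D:ℝ)/2 + m - 1) * Real.Gamma ((D:ℝ)/2 + m)) := by
    intro m
    have h1 := polar_decomp D hD z m
    rw [radial_int D hD m, gaussE D (by omega) z m, gauss_moment_1d m, ← hc1def] at h1
    rw [eq_div_iff (ne_of_gt (hGpos m)), hA]
    exact h1.symm
  have hA0 : A 0 = ((volume : Measure (EuclideanSpace ℝ (Fin D))).toSphere Set.univ).toReal := by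
    rw [hA]
    simp [integral_const]
    exact Or.inl rfl
  have hc1D : (0:ℝ) < c1 ^ (D-1) := pow_pos hc1pos _
  have hA0pos : 0 < A 0 := by
    rw [hAval 0]
    apply div_pos _ (hGpos 0)
    simp only [Nat.mul_zero, pow_zero, one_mul]
    exact mul_pos (mul_pos (Real.rpow_pos_of_pos two_pos _)
      (Real.Gamma_pos_of_pos (by positivity))) hc1D
  have hnorm : ∫ v : Metric.sphere (0 : EuclideanSpace ℝ (Fin D)) 1,
      ⟪(v : EuclideanSpace ℝ (Fin D)), z⟫ ^ (2*k) ∂(sphereUniform D) = (A 0)⁻¹ * A k := by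
    rw [sphereUniform, integral_smul_measure, ENNReal.toReal_inv, hA0, smul_eq_mul]
  rw [hnorm, hAval k, hAval 0]
  -- expand Gammas via Pochhammer
  have hg1 : Real.Gamma ((k:ℝ) + 1/2)
      = (ascPochhammer ℝ k).eval (1/2 : ℝ) * Real.Gamma (1/2) := by
    rw [← gamma_asc (1/2) (by norm_num) k, add_comm]
  have hg2 : Real.Gamma ((D:ℝ)/2 + k)
      = (ascPochhammer ℝ k).eval ((D:ℝ)/2) * Real.Gamma ((D:ℝ)/2) := by
    rw [← gamma_asc ((D:ℝ)/2) hDhalf k]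
  have hp2 : (2:ℝ) ^ ((k:ℝ) + 1/2) = 2 ^ (k:ℝ) * 2 ^ ((1:ℝ)/2) := by
    rw [← Real.rpow_add two_pos]
  have hp3 : (2:ℝ) ^ ((D:ℝ)/2 + k - 1) = 2 ^ ((D:ℝ)/2 - 1) * 2 ^ (k:ℝ) := by
    rw [← Real.rpow_add two_pos]; ring_nf
  have hg05 : (0:ℝ) < Real.Gamma (1/2) := Real.Gamma_pos_of_pos (by norm_num)
  have hgD : (0:ℝ) < Real.Gamma ((D:ℝ)/2) := Real.Gamma_pos_of_pos hDhalf
  have hPD : (0:ℝ) < (ascPochhammer ℝ k).eval ((D:ℝ)/2) := ascPochhammer_pos k _ hDhalf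
  have h2k : (0:ℝ) < 2 ^ (k:ℝ) := Real.rpow_pos_of_pos two_pos _
  have h2h : (0:ℝ) < 2 ^ ((1:ℝ)/2) := Real.rpow_pos_of_pos two_pos _
  have h2D : (0:ℝ) < 2 ^ ((D:ℝ)/2 - 1) := Real.rpow_pos_of_pos two_pos _
  simp only [Nat.cast_zero, zero_add, Nat.mul_zero, pow_zero, one_mul, add_zero]
  rw [hg1, hg2, hp2, hp3]
  have hg2' : Real.Gamma ((D:ℝ)/2 + 0) = Real.Gamma ((D:ℝ)/2) := by norm_num
  field_simp [hg05.ne', hgD.ne', hPD.ne', h2k.ne', h2h.ne', h2D.ne', hc1D.ne', hc1pos.ne']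

theorem sphere_average_gauss (D : ℕ) (hD : 2 ≤ D) (z : EuclideanSpace ℝ (Fin D))
    (γ : ℝ) (hγ : 0 < γ) :
    ∫ v : Metric.sphere (0 : EuclideanSpace ℝ (Fin D)) 1,
        gaussDen ⟪(v : EuclideanSpace ℝ (Fin D)), z⟫ γ 0 ∂(sphereUniform D) =
      (Real.sqrt (2 * Real.pi * γ))⁻¹ * phiD D (‖z‖ ^ 2 / (2 * γ)) := by
  simp only [gaussDen, zero_sub, neg_sq]
  rw [integral_const_mul]
  congr 1
  -- main identity
  set σ := sphereUniform D with hσ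
  set f : ℕ → Metric.sphere (0 : EuclideanSpace ℝ (Fin D)) 1 → ℝ :=
    fun n v => (-(⟪(v : EuclideanSpace ℝ (Fin D)), z⟫ ^ 2 / (2 * γ)))^n / (Nat.factorial n : ℝ)
    with hf
  have hrepr : ∀ v : Metric.sphere (0 : EuclideanSpace ℝ (Fin D)) 1,
      Real.exp (-⟪(v : EuclideanSpace ℝ (Fin D)), z⟫ ^ 2 / (2 * γ)) = ∑' n : ℕ, f n v := by
    intro v
    rw [neg_div, Real.exp_eq_exp_ℝ, NormedSpace.exp_eq_tsum_div]
  have hmeas : ∀ n : ℕ, AEStronglyMeasurable (f n) σ := by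
    intro n
    refine Continuous.aestronglyMeasurable ?_
    exact ((((continuous_subtype_val.inner continuous_const).pow 2).div_const
      (2*γ)).neg.pow n).div_const _
  set s₀ : ℝ := ‖z‖ ^ 2 / (2 * γ) with hs₀
  have hs₀0 : 0 ≤ s₀ := by positivity
  have hbound : ∀ n v, ‖f n v‖ ≤ s₀ ^ n / (Nat.factorial n : ℝ) := by
    intro n v
    have h1 : |⟪(v : EuclideanSpace ℝ (Fin D)), z⟫| ≤ ‖z‖ := by
      have h := abs_real_inner_le_norm (v : EuclideanSpace ℝ (Fin D)) z
      have hv : ‖(v : EuclideanSpace ℝ (Fin D))‖ = 1 :=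
        mem_sphere_zero_iff_norm.mp v.2
      rwa [hv, one_mul] at h
    have h2 : ⟪(v : EuclideanSpace ℝ (Fin D)), z⟫ ^ 2 ≤ ‖z‖ ^ 2 := by
      rw [← sq_abs]
      exact pow_le_pow_left₀ (abs_nonneg _) h1 2
    have h4 : ⟪(v : EuclideanSpace ℝ (Fin D)), z⟫ ^ 2 / (2*γ) ≤ s₀ := by
      rw [hs₀]
      gcongr
    rw [hf]
    simp only [norm_div, Real.norm_eq_abs, abs_pow, abs_neg, Nat.abs_cast]
    rw [abs_of_nonneg (by positivity : (0:ℝ) ≤ ⟪(v : EuclideanSpace ℝ (Fin D)), z⟫ ^ 2 / (2*γ))]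
    gcongr
  have hσuniv : σ Set.univ ≤ 1 := by
    rw [hσ, sphereUniform, Measure.smul_apply, smul_eq_mul]
    by_cases h : ((volume : Measure (EuclideanSpace ℝ (Fin D))).toSphere Set.univ) = 0
    · simp [h]
    · rw [ENNReal.inv_mul_cancel h (measure_ne_top _ _)]
  have hlint : ∀ n : ℕ, ∫⁻ v, ‖f n v‖₊ ∂σ ≤ ENNReal.ofReal (s₀ ^ n / (Nat.factorial n : ℝ)) := by
    intro n
    have step : ∫⁻ v, ‖f n v‖₊ ∂σ ≤ ∫⁻ _, ENNReal.ofReal (s₀ ^ n / (Nat.factorial n : ℝ)) ∂σ := by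
      refine lintegral_mono (fun v => ?_)
      rw [← enorm_eq_nnnorm, ← ofReal_norm]
      exact ENNReal.ofReal_le_ofReal (hbound n v)
    refine step.trans ?_
    rw [lintegral_const]
    calc ENNReal.ofReal (s₀ ^ n / (Nat.factorial n : ℝ)) * σ Set.univ
        ≤ ENNReal.ofReal (s₀ ^ n / (Nat.factorial n : ℝ)) * 1 := by
          exact mul_le_mul_right hσuniv _
      _ = _ := mul_one _
  have hswap : ∫ v, (∑' n : ℕ, f n v) ∂σ = ∑' n : ℕ, ∫ v, f n v ∂σ := by
    refine integral_tsum hmeas ?_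
    have hle : ∑' n : ℕ, ∫⁻ v, ‖f n v‖₊ ∂σ
        ≤ ∑' n : ℕ, ENNReal.ofReal (s₀ ^ n / (Nat.factorial n : ℝ)) :=
      ENNReal.tsum_le_tsum hlint
    have hfin : ∑' n : ℕ, ENNReal.ofReal (s₀ ^ n / (Nat.factorial n : ℝ)) ≠ ⊤ := by
      rw [← ENNReal.ofReal_tsum_of_nonneg (fun n => by positivity)
        (Real.summable_pow_div_factorial s₀)]
      exact ENNReal.ofReal_ne_top
    exact ne_top_of_le_ne_top hfin hle
  have hterm : ∀ n : ℕ, ∫ v, f n v ∂σ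
      = ((ascPochhammer ℝ n).eval (1/2 : ℝ) / (ascPochhammer ℝ n).eval ((D:ℝ)/2))
        * (-s₀) ^ n / (Nat.factorial n : ℝ) := by
    intro n
    have hfe : ∀ v : Metric.sphere (0 : EuclideanSpace ℝ (Fin D)) 1,
        f n v = ((-(2*γ)⁻¹) ^ n / (Nat.factorial n : ℝ))
          * ⟪(v : EuclideanSpace ℝ (Fin D)), z⟫ ^ (2*n) := by
      intro v
      simp only [hf]
      rw [pow_mul]
      rw [show -(⟪(v : EuclideanSpace ℝ (Fin D)), z⟫ ^ 2 / (2 * γ))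
        = (-(2*γ)⁻¹) * ⟪(v : EuclideanSpace ℝ (Fin D)), z⟫ ^ 2 by ring, mul_pow]
      ring
    rw [integral_congr_ae (Filter.Eventually.of_forall hfe), integral_const_mul,
      sphere_moment D hD z n]
    rw [show (-s₀ : ℝ) = (-(2*γ)⁻¹) * ‖z‖ ^ 2 by rw [hs₀]; ring, mul_pow, pow_mul]
    ring
  calc ∫ v, Real.exp (-⟪(v : EuclideanSpace ℝ (Fin D)), z⟫ ^ 2 / (2 * γ)) ∂σ
      = ∫ v, (∑' n : ℕ, f n v) ∂σ := integral_congr_ae (Filter.Eventually.of_forall hrepr)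
    _ = ∑' n : ℕ, ∫ v, f n v ∂σ := hswap
    _ = phiD D s₀ := by
        rw [phiD, kummerM]
        exact tsum_congr (fun n => by rw [hterm n])

end Aux
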